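/- In the mixed Deffuant model, assume inf_{t≥0} μ(t) > 0. Then almost surely, for every δ > 0 there exists a time t ≥ 0 such that for all s ≥ t, every pair {i,j} ∈ E(s) ∩ 𝓔(s) satisfies ‖x_i(s) − x_j(s)‖ ≤ δ. -/

import Mathlib

open MeasureTheory ProbabilityTheory Filter
open scoped ENNReal

open scoped Classical in
/-- One step of the mixed Deffuant model: given confidence threshold `ε`, convergence
parameter `μt`, social edge set `Et` and selected (unordered) pair `p`, each endpoint of `p`
moves toward the other at rate `μt` provided `p` is a social edge and the two opinions are
within distance `ε`; all other agents keep their opinion. -/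
noncomputable def deffuantStep {V W : Type*} [NormedAddCommGroup W] [NormedSpace ℝ W]
    (ε μt : ℝ) (Et : Set (Sym2 V)) (p : Sym2 V) (x : V → W) : V → W :=
  fun k =>
    if h : k ∈ p then
      if p ∈ Et ∧ ‖x k - x (Sym2.Mem.other h)‖ ≤ ε then
        x k + μt • (x (Sym2.Mem.other h) - x k)
      else x k
    else x k

/-- The trajectory of the mixed Deffuant model with confidence threshold `ε`, convergence
parameters `μ`, social edge sets `E`, selected pairs `e` and initial opinions `x0`. -/
noncomputable def deffuantTraj {V W : Type*} [NormedAddCommGroup W] [NormedSpace ℝ W]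
    (ε : ℝ) (μ : ℕ → ℝ) (E : ℕ → Set (Sym2 V)) (e : ℕ → Sym2 V) (x0 : V → W) :
    ℕ → V → W
  | 0 => x0
  | t + 1 => deffuantStep ε (μ t) (E t) (e t) (deffuantTraj ε μ E e x0 t)

namespace DeffuantAux

lemma other_eq {V : Type*} {a b : V} {p : Sym2 V} (h : a ∈ p) (hp : p = s(a, b)) :
    Sym2.Mem.other h = b := by
  have h2 := Sym2.other_spec h
  exact Sym2.congr_right.mp (h2.trans hp)

section Step
variable {V W : Type*} [NormedAddCommGroup W] [NormedSpace ℝ W]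

lemma step_inactive (ε μt : ℝ) (Et : Set (Sym2 V)) {i j : V} {x : V → W}
    (hcond : ¬ (s(i, j) ∈ Et ∧ ‖x i - x j‖ ≤ ε)) :
    deffuantStep ε μt Et s(i, j) x = x := by
  funext k
  unfold deffuantStep
  split_ifs with h h2
  · exfalso
    rcases Sym2.mem_iff.mp h with rfl | rfl
    · rw [other_eq h rfl] at h2; exact hcond h2
    · rw [other_eq h (Sym2.eq_swap)] at h2
      rw [norm_sub_rev] at h2
      exact hcond ⟨h2.1, h2.2⟩
  · rfl
  · rfl

lemma step_active_left (ε μt : ℝ) (Et : Set (Sym2 V)) {i j : V} {x : V → W}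
    (hmem : s(i, j) ∈ Et) (hnorm : ‖x i - x j‖ ≤ ε) :
    deffuantStep ε μt Et s(i, j) x i = x i + μt • (x j - x i) := by
  unfold deffuantStep
  have h : i ∈ s(i, j) := Sym2.mem_mk_left i j
  rw [dif_pos h, other_eq h rfl, if_pos ⟨hmem, hnorm⟩]

lemma step_active_right (ε μt : ℝ) (Et : Set (Sym2 V)) {i j : V} {x : V → W}
    (hmem : s(i, j) ∈ Et) (hnorm : ‖x i - x j‖ ≤ ε) :
    deffuantStep ε μt Et s(i, j) x j = x j + μt • (x i - x j) := by
  unfold deffuantStep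
  have h : j ∈ s(i, j) := Sym2.mem_mk_right i j
  rw [dif_pos h, other_eq h Sym2.eq_swap, if_pos ⟨hmem, by rwa [norm_sub_rev]⟩]

lemma step_notmem (ε μt : ℝ) (Et : Set (Sym2 V)) {p : Sym2 V} {k : V} {x : V → W}
    (h : k ∉ p) : deffuantStep ε μt Et p x k = x k := by
  unfold deffuantStep
  rw [dif_neg h]

lemma step_diag (ε μt : ℝ) (Et : Set (Sym2 V)) {i : V} (x : V → W) :
    deffuantStep ε μt Et s(i, i) x = x := by
  funext k
  unfold deffuantStep
  split_ifs with h h2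
  · have hk : k = i := by rcases Sym2.mem_iff.mp h with rfl | rfl <;> rfl
    subst hk
    rw [other_eq h rfl, sub_self, smul_zero, add_zero]
  · rfl
  · rfl

/-- Trajectories only depend on the selected pairs strictly before the given time. -/
lemma traj_congr (ε : ℝ) (μ : ℕ → ℝ) (E : ℕ → Set (Sym2 V)) (e e' : ℕ → Sym2 V)
    (x0 : V → W) : ∀ t : ℕ, (∀ u < t, e u = e' u) →
    deffuantTraj ε μ E e x0 t = deffuantTraj ε μ E e' x0 t := by
  intro t
  induction t with
  | zero => intro _; rfl
  | succ t ih =>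
    intro h
    have h1 : deffuantTraj ε μ E e x0 t = deffuantTraj ε μ E e' x0 t :=
      ih fun u hu => h u (hu.trans (Nat.lt_succ_self t))
    show deffuantStep ε (μ t) (E t) (e t) _ = deffuantStep ε (μ t) (E t) (e' t) _
    rw [h1, h t (Nat.lt_succ_self t)]

end Step

section Energy
variable {V : Type*} [Fintype V] [DecidableEq V]
variable {F : Type*} [NormedAddCommGroup F] [InnerProductSpace ℝ F]

lemma pair_energy (a b : F) (c : ℝ) :
    ‖a + c • (b - a)‖ ^ 2 + ‖b + c • (a - b)‖ ^ 2
      = ‖a‖ ^ 2 + ‖b‖ ^ 2 - 2 * c * (1 - c) * ‖a - b‖ ^ 2 := by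
  have h1 : ‖a + c • (b - a)‖ ^ 2 = ‖a‖ ^ 2 + 2 * (c * inner ℝ a (b - a)) + c ^ 2 * ‖b - a‖ ^ 2 := by
    rw [norm_add_sq_real, real_inner_smul_right, norm_smul]
    simp [mul_pow, Real.norm_eq_abs, sq_abs]
  have h2 : ‖b + c • (a - b)‖ ^ 2 = ‖b‖ ^ 2 + 2 * (c * inner ℝ b (a - b)) + c ^ 2 * ‖a - b‖ ^ 2 := by
    rw [norm_add_sq_real, real_inner_smul_right, norm_smul]
    simp [mul_pow, Real.norm_eq_abs, sq_abs]
  have h3 : (inner ℝ a (b - a) : ℝ) + inner ℝ b (a - b) = - ‖a - b‖ ^ 2 := by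
    have h5 : ‖a - b‖ ^ 2 = inner ℝ a a - 2 * inner ℝ a b + inner ℝ b b := by
      rw [norm_sub_sq_real, real_inner_self_eq_norm_sq, real_inner_self_eq_norm_sq]
    rw [inner_sub_right, inner_sub_right, h5, real_inner_comm b a]
    ring
  have h4 : ‖b - a‖ = ‖a - b‖ := norm_sub_rev b a
  rw [h1, h2, h4]
  linear_combination (2 * c) * h3

/-- Exact energy identity for an active non-diagonal step. -/
lemma energy_step_active (ε μt : ℝ) (Et : Set (Sym2 V)) {i j : V} (hij : i ≠ j) {x : V → F}
    (hmem : s(i, j) ∈ Et) (hnorm : ‖x i - x j‖ ≤ ε) :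
    ∑ k, ‖deffuantStep ε μt Et s(i, j) x k‖ ^ 2
      = ∑ k, ‖x k‖ ^ 2 - 2 * μt * (1 - μt) * ‖x i - x j‖ ^ 2 := by
  set y := deffuantStep ε μt Et s(i, j) x with hy
  have hsub : ∑ k, (‖y k‖ ^ 2 - ‖x k‖ ^ 2) = ∑ k ∈ ({i, j} : Finset V), (‖y k‖ ^ 2 - ‖x k‖ ^ 2) := by
    refine (Finset.sum_subset (Finset.subset_univ _) ?_).symm
    intro k _ hk
    have hknot : k ∉ s(i, j) := by
      rw [Sym2.mem_iff]
      simpa using hk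
    rw [hy, step_notmem ε μt Et hknot, sub_self]
  have hpair : ∑ k ∈ ({i, j} : Finset V), (‖y k‖ ^ 2 - ‖x k‖ ^ 2)
      = (‖y i‖ ^ 2 - ‖x i‖ ^ 2) + (‖y j‖ ^ 2 - ‖x j‖ ^ 2) := Finset.sum_pair hij
  have hyi : y i = x i + μt • (x j - x i) := step_active_left ε μt Et hmem hnorm
  have hyj : y j = x j + μt • (x i - x j) := step_active_right ε μt Et hmem hnorm
  have key := pair_energy (x i) (x j) μt
  rw [← hyi, ← hyj] at key
  have hd := Finset.sum_sub_distrib (s := (Finset.univ : Finset V))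
    (f := fun k => ‖y k‖ ^ 2) (g := fun k => ‖x k‖ ^ 2)
  linarith [hd, hsub, hpair, key]

/-- Energy never increases under a step, provided `0 ≤ μt ≤ 1/2`. -/
lemma energy_step_le (ε μt : ℝ) (hμ0 : 0 ≤ μt) (hμ1 : μt ≤ 1 / 2) (Et : Set (Sym2 V))
    (p : Sym2 V) (x : V → F) :
    ∑ k, ‖deffuantStep ε μt Et p x k‖ ^ 2 ≤ ∑ k, ‖x k‖ ^ 2 := by
  induction p using Sym2.inductionOn with
  | hf i j =>
    by_cases hij : i = j
    · subst hij; rw [step_diag]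
    by_cases hcond : s(i, j) ∈ Et ∧ ‖x i - x j‖ ≤ ε
    · rw [energy_step_active ε μt Et hij hcond.1 hcond.2]
      nlinarith [sq_nonneg ‖x i - x j‖, mul_nonneg hμ0 (sq_nonneg ‖x i - x j‖)]
    · rw [step_inactive ε μt Et hcond]

end Energy

section Counting

open scoped Classical in
/-- If a nonnegative, nonincreasing sequence drops by at least `c > 0` at every "hit",
then there are only finitely many hits. -/
lemma hits_finite (f : ℕ → ℝ) (c : ℝ) (hc : 0 < c) (hf0 : ∀ n, 0 ≤ f n)
    (Hit : ℕ → Prop) (hmono : ∀ n, f (n + 1) ≤ f n)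
    (hdrop : ∀ n, Hit n → f (n + 1) ≤ f n - c) : {n | Hit n}.Finite := by
  have key : ∀ n : ℕ, f n + c * ((Finset.range n).filter (fun k => Hit k)).card ≤ f 0 := by
    intro n
    induction n with
    | zero => simp
    | succ n ih =>
      rw [Finset.range_add_one, Finset.filter_insert]
      by_cases hn : Hit n
      · rw [if_pos hn, Finset.card_insert_of_notMem (by simp)]
        have := hdrop n hn
        push_cast
        linarith
      · rw [if_neg hn]
        have := hmono n
        linarith
  by_contra hinf
  have hinf' : {n | Hit n}.Infinite := hinf
  obtain ⟨T, hTsub, hTfin, hTcard⟩ := hinf'.exists_subset_ncard_eq (Nat.ceil (f 0 / c) + 1)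
  set M : ℕ := hTfin.toFinset.sup id + 1 with hM
  have hTsub' : hTfin.toFinset ⊆ (Finset.range M).filter (fun k => Hit k) := by
    intro t ht
    rw [Finset.mem_filter, Finset.mem_range]
    refine ⟨Nat.lt_succ_of_le (Finset.le_sup (f := id) ht), ?_⟩
    exact hTsub (hTfin.mem_toFinset.mp ht)
  have hcard : Nat.ceil (f 0 / c) + 1 ≤ ((Finset.range M).filter (fun k => Hit k)).card := by
    calc Nat.ceil (f 0 / c) + 1 = hTfin.toFinset.card := by
          rw [← hTcard, Set.ncard_eq_toFinset_card _ hTfin]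
    _ ≤ _ := Finset.card_le_card hTsub'
  have h1 := key M
  have h2 : (f 0 / c : ℝ) < (((Finset.range M).filter (fun k => Hit k)).card : ℝ) := by
    calc (f 0 / c : ℝ) ≤ (Nat.ceil (f 0 / c) : ℝ) := Nat.le_ceil _
    _ < ((Nat.ceil (f 0 / c) + 1 : ℕ) : ℝ) := by push_cast; linarith
    _ ≤ _ := by exact_mod_cast Nat.cast_le.mpr hcard
  have h3 : f 0 < c * (((Finset.range M).filter (fun k => Hit k)).card : ℝ) := by
    rw [div_lt_iff₀ hc] at h2
    linarith [mul_comm c (((Finset.range M).filter (fun k => Hit k)).card : ℝ)]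
  linarith [hf0 M]

/-- The counting function of an infinite set of naturals tends to infinity. -/
lemma card_filter_tendsto {p : ℕ → Prop} [DecidablePred p] (hS : {n | p n}.Infinite) :
    Tendsto (fun n => (((Finset.range n).filter p).card : ℝ)) atTop atTop := by
  rw [tendsto_atTop]
  intro b
  obtain ⟨T, hTsub, hTfin, hTcard⟩ := hS.exists_subset_ncard_eq (Nat.ceil b)
  rw [eventually_atTop]
  refine ⟨hTfin.toFinset.sup id + 1, fun n hn => ?_⟩
  have hsub : hTfin.toFinset ⊆ (Finset.range n).filter p := by
    intro t ht
    rw [Finset.mem_filter, Finset.mem_range]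
    exact ⟨lt_of_lt_of_le (Nat.lt_succ_of_le (Finset.le_sup (f := id) ht)) hn,
      hTsub (hTfin.mem_toFinset.mp ht)⟩
  calc b ≤ (Nat.ceil b : ℝ) := Nat.le_ceil b
  _ = (hTfin.toFinset.card : ℝ) := by rw [← hTcard, Set.ncard_eq_toFinset_card _ hTfin]
  _ ≤ _ := by exact_mod_cast Finset.card_le_card hsub

end Counting

/-- Every subset of a finite product of countable discrete measurable spaces is measurable. -/
lemma measurableSet_pi_top {ι β : Type*} [Finite ι] [Countable β]
    (s : Set (ι → β)) :
    MeasurableSet[@MeasurableSpace.pi ι (fun _ => β) (fun _ => ⊤)] s := by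
  letI : MeasurableSpace β := ⊤
  have hsing : ∀ v : ι → β, MeasurableSet[MeasurableSpace.pi] {v} := by
    intro v
    have hv : ({v} : Set (ι → β)) = ⋂ i, (fun f : ι → β => f i) ⁻¹' {v i} := by
      ext f
      simp [funext_iff]
    rw [hv]
    exact MeasurableSet.iInter fun i =>
      measurable_pi_apply i (MeasurableSpace.measurableSet_top)
  have hs : s = ⋃ v ∈ s, {v} := by simp
  rw [hs]
  exact MeasurableSet.biUnion (Set.to_countable s) fun v _ => hsing v

end DeffuantAux

namespace DeffuantAux

lemma key {d : ℕ} {V : Type*} [Fintype V] (hV : 2 ≤ Fintype.card V)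
    {Ω : Type*} [mΩ : MeasurableSpace Ω] (P : Measure Ω) [IsProbabilityMeasure P]
    (e : ℕ → Ω → Sym2 V)
    (hmeas : ∀ t, @Measurable Ω (Sym2 V) _ ⊤ (e t))
    (hindep : iIndepFun (m := fun _ : ℕ => (⊤ : MeasurableSpace (Sym2 V))) e P)
    (hunif : ∀ t, ∀ p : Sym2 V, ¬ p.IsDiag →
      P {ω | e t ω = p} = ((Nat.card {q : Sym2 V // ¬ q.IsDiag} : ℝ≥0∞))⁻¹)
    (ε : ℝ) (μ : ℕ → ℝ) (hμ : ∀ t, μ t ∈ Set.Icc (0 : ℝ) (1 / 2))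
    (hinf : 0 < ⨅ t, μ t)
    (E : ℕ → Set (Sym2 V)) (x0 : V → EuclideanSpace ℝ (Fin d))
    (i j : V) (hij : i ≠ j) (q : ℝ) (hq : 0 < q) :
    ∀ᵐ ω ∂P, ∃ T : ℕ, ∀ s, T ≤ s →
      ¬ (s(i, j) ∈ E s ∧
        q < ‖deffuantTraj ε μ E (fun u => e u ω) x0 s i
              - deffuantTraj ε μ E (fun u => e u ω) x0 s j‖ ∧
        ‖deffuantTraj ε μ E (fun u => e u ω) x0 s i
              - deffuantTraj ε μ E (fun u => e u ω) x0 s j‖ ≤ ε) := by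
  classical
  letI mS : MeasurableSpace (Sym2 V) := ⊤
  set X : ℕ → Ω → V → EuclideanSpace ℝ (Fin d) :=
    fun t ω => deffuantTraj ε μ E (fun u => e u ω) x0 t with hX
  set A : ℕ → Set Ω := fun t =>
    {ω | s(i, j) ∈ E t ∧ q < ‖X t ω i - X t ω j‖ ∧ ‖X t ω i - X t ω j‖ ≤ ε} with hA
  set H : ℕ → Set Ω := fun t => A t ∩ {ω | e t ω = s(i, j)} with hH
  set vec : (k : ℕ) → Ω → (↥(Finset.range (k + 1)) → Sym2 V) :=
    fun k ω u => e u ω with hvec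
  have hvec_meas : ∀ k, Measurable (vec k) :=
    fun k => measurable_pi_lambda _ fun u => hmeas u
  set ℱ : Filtration ℕ mΩ :=
    { seq := fun k => MeasurableSpace.comap (vec k) MeasurableSpace.pi
      mono' := by
        intro k l hkl s hs
        obtain ⟨s', -, rfl⟩ := hs
        exact ⟨(fun (v : ↥(Finset.range (l + 1)) → Sym2 V) (u : ↥(Finset.range (k + 1))) =>
          v ⟨(u : ℕ), Finset.mem_range.mpr
            (lt_of_lt_of_le (Finset.mem_range.mp u.2) (by omega))⟩) ⁻¹' s',
          measurableSet_pi_top _, rfl⟩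
      le' := fun k => (hvec_meas k).comap_le } with hℱ
  have hzero : ∀ k : ℕ, (0 : ℕ) ∈ Finset.range (k + 1) :=
    fun k => Finset.mem_range.mpr k.succ_pos
  have hfactor : ∀ (k : ℕ) (ω : Ω), X (k + 1) ω
      = deffuantTraj ε μ E (fun u => if h : u ∈ Finset.range (k + 1) then vec k ω ⟨u, h⟩
          else vec k ω ⟨0, hzero k⟩) x0 (k + 1) := by
    intro k ω
    refine traj_congr ε μ E _ _ x0 (k + 1) fun u hu => ?_
    rw [dif_pos (Finset.mem_range.mpr hu)]
  have hAmeas : ∀ k : ℕ, MeasurableSet[ℱ k] (A (k + 1)) := by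
    intro k
    refine ⟨{v : ↥(Finset.range (k + 1)) → Sym2 V | s(i, j) ∈ E (k + 1) ∧
      q < ‖(deffuantTraj ε μ E (fun u => if h : u ∈ Finset.range (k + 1) then v ⟨u, h⟩
          else v ⟨0, hzero k⟩) x0 (k + 1)) i
        - (deffuantTraj ε μ E (fun u => if h : u ∈ Finset.range (k + 1) then v ⟨u, h⟩
          else v ⟨0, hzero k⟩) x0 (k + 1)) j‖ ∧
      ‖(deffuantTraj ε μ E (fun u => if h : u ∈ Finset.range (k + 1) then v ⟨u, h⟩
          else v ⟨0, hzero k⟩) x0 (k + 1)) i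
        - (deffuantTraj ε μ E (fun u => if h : u ∈ Finset.range (k + 1) then v ⟨u, h⟩
          else v ⟨0, hzero k⟩) x0 (k + 1)) j‖ ≤ ε},
      measurableSet_pi_top _, ?_⟩
    ext ω
    simp only [Set.mem_preimage, Set.mem_setOf_eq, hA]
    rw [← hfactor k ω]
  have hBmeas : ∀ n : ℕ, MeasurableSet[ℱ n] {ω | e n ω = s(i, j)} := by
    intro n
    exact ⟨{v : ↥(Finset.range (n + 1)) → Sym2 V | v ⟨n, Finset.self_mem_range_succ n⟩ = s(i, j)},
      measurableSet_pi_top _, rfl⟩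
  have hHmeas : ∀ n : ℕ, MeasurableSet[ℱ n] (H n) := by
    intro n
    match n with
    | 0 =>
      by_cases h0 : s(i, j) ∈ E 0 ∧ q < ‖x0 i - x0 j‖ ∧ ‖x0 i - x0 j‖ ≤ ε
      · have hH0 : H 0 = {ω | e 0 ω = s(i, j)} := by
          ext ω
          simp only [hH, hA, Set.mem_inter_iff, Set.mem_setOf_eq]
          have hx : X 0 ω = x0 := rfl
          rw [hx]
          tauto
        rw [hH0]
        exact hBmeas 0
      · have hH0 : H 0 = ∅ := by
          ext ω
          simp only [hH, hA, Set.mem_inter_iff, Set.mem_setOf_eq, Set.mem_empty_iff_false]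
          have hx : X 0 ω = x0 := rfl
          rw [hx]
          tauto
        rw [hH0]
        exact @MeasurableSet.empty _ (ℱ 0)
    | (k + 1) => exact ((ℱ.mono k.le_succ) _ (hAmeas k)).inter (hBmeas (k + 1))
  -- independence of e (k+1) from ℱ k
  have hindepk : ∀ k : ℕ, Indep (MeasurableSpace.comap (e (k + 1)) ⊤) (ℱ k) P := by
    intro k
    have hd : Disjoint ({k + 1} : Finset ℕ) (Finset.range (k + 1)) := by
      simp [Finset.disjoint_left]
    have h1 := hindep.indepFun_finset {k + 1} (Finset.range (k + 1)) hd hmeas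
    rw [IndepFun_iff_Indep] at h1
    exact indep_of_indep_of_le_left h1 (fun s hs => by
      obtain ⟨s', -, rfl⟩ := hs
      exact ⟨(fun v : (↥({k + 1} : Finset ℕ)) → Sym2 V =>
        v ⟨k + 1, Finset.mem_singleton_self _⟩) ⁻¹' s', measurableSet_pi_top _, rfl⟩)
  -- the uniform probability
  set nc : ℕ := Nat.card {p : Sym2 V // ¬ p.IsDiag} with hnc
  have hp : ¬ (s(i, j)).IsDiag := by simpa [Sym2.mk_isDiag_iff] using hij
  have hncpos : 0 < nc := by
    have : Nonempty {p : Sym2 V // ¬ p.IsDiag} := ⟨⟨s(i, j), hp⟩⟩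
    exact Nat.card_pos
  have PB : ∀ n, P {ω | e n ω = s(i, j)} = ((nc : ℝ≥0∞))⁻¹ := fun n => hunif n _ hp
  have hcpos : (0 : ℝ) < (nc : ℝ)⁻¹ := by positivity
  -- conditional expectation computation
  have hce : ∀ k : ℕ, (P[(H (k + 1)).indicator (1 : Ω → ℝ) | ℱ k])
      =ᵐ[P] (A (k + 1)).indicator (fun _ => (nc : ℝ)⁻¹) := by
    intro k
    have hBpre : {ω | e (k + 1) ω = s(i, j)} = e (k + 1) ⁻¹' {s(i, j)} := rfl
    have hB : MeasurableSet {ω | e (k + 1) ω = s(i, j)} := by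
      rw [hBpre]
      exact (hmeas (k + 1)) MeasurableSpace.measurableSet_top
    have hHsplit : (H (k + 1)).indicator (1 : Ω → ℝ)
        = (A (k + 1)).indicator 1 * ({ω | e (k + 1) ω = s(i, j)}).indicator 1 :=
      Set.inter_indicator_one
    have hint1 : Integrable (({ω | e (k + 1) ω = s(i, j)}).indicator (1 : Ω → ℝ)) P :=
      (integrable_const (1 : ℝ)).indicator hB
    have hint2 : Integrable ((A (k + 1)).indicator (1 : Ω → ℝ)
        * ({ω | e (k + 1) ω = s(i, j)}).indicator 1) P := by
      rw [← hHsplit]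
      exact (integrable_const (1 : ℝ)).indicator (ℱ.le (k + 1) _ (hHmeas (k + 1)))
    have hsm : StronglyMeasurable[ℱ k] ((A (k + 1)).indicator (1 : Ω → ℝ)) :=
      stronglyMeasurable_const.indicator (hAmeas k)
    have hpull := condExp_mul_of_stronglyMeasurable_left hsm hint2 hint1
    have hsmB : StronglyMeasurable[MeasurableSpace.comap (e (k + 1)) ⊤]
        (({ω | e (k + 1) ω = s(i, j)}).indicator (1 : Ω → ℝ)) :=
      stronglyMeasurable_const.indicator ⟨{s(i, j)}, MeasurableSpace.measurableSet_top, rfl⟩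
    have hcB := condExp_indep_eq ((hmeas (k + 1)).comap_le) (ℱ.le k) hsmB (hindepk k)
    have hval : ∫ ω, ({ω | e (k + 1) ω = s(i, j)}).indicator (1 : Ω → ℝ) ω ∂P
        = ((nc : ℝ))⁻¹ := by
      rw [integral_indicator_one hB, measureReal_def, PB (k + 1)]
      simp
    have hfin : ((A (k + 1)).indicator (1 : Ω → ℝ)) * (fun _ => (nc : ℝ)⁻¹)
        = (A (k + 1)).indicator (fun _ => (nc : ℝ)⁻¹) := by
      funext ω
      by_cases hω : ω ∈ A (k + 1) <;> simp [Set.indicator_apply, hω]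
    rw [hHsplit]
    refine hpull.trans ?_
    have hcB' : (P[({ω | e (k + 1) ω = s(i, j)}).indicator (1 : Ω → ℝ) | ℱ k])
        =ᵐ[P] (fun _ => (nc : ℝ)⁻¹) := by
      refine hcB.trans (Filter.EventuallyEq.of_eq ?_)
      funext ω
      rw [hval]
    calc ((A (k + 1)).indicator (1 : Ω → ℝ))
          * (P[({ω | e (k + 1) ω = s(i, j)}).indicator (1 : Ω → ℝ) | ℱ k])
        =ᵐ[P] ((A (k + 1)).indicator (1 : Ω → ℝ)) * (fun _ => (nc : ℝ)⁻¹) :=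
          EventuallyEq.mul (EventuallyEq.refl _ _) hcB'
      _ =ᵐ[P] (A (k + 1)).indicator (fun _ => (nc : ℝ)⁻¹) := Filter.EventuallyEq.of_eq hfin
  -- Lévy's generalized Borel-Cantelli
  have hlevy := ae_mem_limsup_atTop_iff (ℱ := ℱ) P (s := H) hHmeas
  have hall : ∀ᵐ ω ∂P, ∀ k : ℕ, (P[(H (k + 1)).indicator (1 : Ω → ℝ) | ℱ k]) ω
      = (A (k + 1)).indicator (fun _ => (nc : ℝ)⁻¹) ω := ae_all_iff.mpr fun k => hce k
  -- deterministic: only finitely many hits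
  set m : ℝ := ⨅ t, μ t with hmdef
  have hmle : ∀ t, m ≤ μ t :=
    fun t => ciInf_le ⟨0, fun r ⟨t', ht'⟩ => ht' ▸ (hμ t').1⟩ t
  have hdet : ∀ ω : Ω, ω ∉ limsup H atTop := by
    intro ω hω
    rw [Filter.mem_limsup_iff_frequently_mem, Nat.frequently_atTop_iff_infinite] at hω
    refine Set.not_infinite.mpr ?_ hω
    refine hits_finite (fun n => ∑ k, ‖X n ω k‖ ^ 2) (m * q ^ 2)
      (by positivity) (fun n => Finset.sum_nonneg fun k _ => sq_nonneg _)
      (fun n => ω ∈ H n) ?_ ?_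
    · intro n
      show ∑ k, ‖X (n + 1) ω k‖ ^ 2 ≤ ∑ k, ‖X n ω k‖ ^ 2
      have hstep : X (n + 1) ω = deffuantStep ε (μ n) (E n) (e n ω) (X n ω) := rfl
      rw [hstep]
      exact energy_step_le ε (μ n) (hμ n).1 (hμ n).2 _ _ _
    · intro n hn
      simp only [hH, Set.mem_inter_iff, Set.mem_setOf_eq] at hn
      obtain ⟨hAn, hen⟩ := hn
      simp only [hA, Set.mem_setOf_eq] at hAn
      show ∑ k, ‖X (n + 1) ω k‖ ^ 2 ≤ ∑ k, ‖X n ω k‖ ^ 2 - m * q ^ 2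
      have hstep : X (n + 1) ω = deffuantStep ε (μ n) (E n) (s(i, j)) (X n ω) := by
        rw [← hen]; rfl
      rw [hstep, energy_step_active ε (μ n) (E n) hij hAn.1 hAn.2.2]
      have hr := hAn.2.1
      have h1 := (hμ n).1
      have h2 := (hμ n).2
      have h3 := hmle n
      have hrq : q ^ 2 ≤ ‖X n ω i - X n ω j‖ ^ 2 := by nlinarith
      have hμm : m ≤ 2 * μ n * (1 - μ n) := by nlinarith
      have hineq : m * q ^ 2 ≤ 2 * μ n * (1 - μ n) * ‖X n ω i - X n ω j‖ ^ 2 :=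
        mul_le_mul hμm hrq (by positivity) (by nlinarith)
      linarith
  -- combine
  filter_upwards [hlevy, hall] with ω hωl hωa
  have hnot : ¬ Tendsto (fun n => ∑ k ∈ Finset.range n,
      (P[(H (k + 1)).indicator (1 : Ω → ℝ) | ℱ k]) ω) atTop atTop :=
    fun h => hdet ω (hωl.mpr h)
  have hfreq : ¬ (∃ᶠ t in atTop, ω ∈ A t) := by
    intro hfr
    apply hnot
    have hSinf : {t | ω ∈ A t}.Infinite := Nat.frequently_atTop_iff_infinite.mp hfr
    have hS'inf : {k : ℕ | ω ∈ A (k + 1)}.Infinite := by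
      intro hfin
      have hsubset : {t | ω ∈ A t} ⊆ insert 0 ((fun k => k + 1) '' {k | ω ∈ A (k + 1)}) := by
        intro t ht
        cases t with
        | zero => exact Set.mem_insert _ _
        | succ k => exact Set.mem_insert_of_mem _ ⟨k, ht, rfl⟩
      exact hSinf (((hfin.image _).insert 0).subset hsubset)
    have hsum : ∀ n : ℕ, ∑ k ∈ Finset.range n,
        (P[(H (k + 1)).indicator (1 : Ω → ℝ) | ℱ k]) ω
        = (((Finset.range n).filter (fun k => ω ∈ A (k + 1))).card : ℝ) * (nc : ℝ)⁻¹ := by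
      intro n
      rw [Finset.sum_congr rfl (fun k _ => hωa k)]
      induction n with
      | zero => simp
      | succ n ih =>
        rw [Finset.sum_range_succ, ih, Finset.range_add_one, Finset.filter_insert]
        by_cases hk : ω ∈ A (n + 1)
        · rw [if_pos hk, Finset.card_insert_of_notMem (by simp),
            Set.indicator_of_mem hk]
          push_cast
          ring
        · rw [if_neg hk, Set.indicator_of_notMem hk, add_zero]
    have hcount := card_filter_tendsto (p := fun k => ω ∈ A (k + 1)) hS'inf
    have htend : Tendsto (fun n : ℕ =>
        (((Finset.range n).filter (fun k => ω ∈ A (k + 1))).card : ℝ) * (nc : ℝ)⁻¹)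
        atTop atTop := by
      refine Tendsto.atTop_mul_const hcpos ?_
      exact hcount
    exact htend.congr (fun n => (hsum n).symm)
  rw [Filter.not_frequently] at hfreq
  obtain ⟨T, hT⟩ := Filter.eventually_atTop.mp hfreq
  refine ⟨T, fun s hs hcond => hT s hs ?_⟩
  simp only [hA, Set.mem_setOf_eq]
  exact hcond

end DeffuantAux

/-- Corollary 3 of the paper. If `inf_{t ≥ 0} μ(t) > 0`, then almost
surely, for every `δ > 0` there is a time `t` such that for all `s ≥ t` every edge of the
profile `E(s) ∩ 𝓔(s)` has length at most `δ`. -/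
theorem deffuant_profile_edges_eventually_short
    {d : ℕ} (hd : 1 ≤ d) {V : Type*} [Fintype V] (hV : 2 ≤ Fintype.card V)
    {Ω : Type*} [MeasurableSpace Ω] (P : Measure Ω) [IsProbabilityMeasure P]
    (e : ℕ → Ω → Sym2 V)
    (hmeas : ∀ t, @Measurable Ω (Sym2 V) _ ⊤ (e t))
    (hindep : iIndepFun (m := fun _ : ℕ => (⊤ : MeasurableSpace (Sym2 V))) e P)
    (hunif : ∀ t, ∀ p : Sym2 V, ¬ p.IsDiag →
      P {ω | e t ω = p} = ((Nat.card {q : Sym2 V // ¬ q.IsDiag} : ℝ≥0∞))⁻¹)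
    (ε : ℝ) (hε : 0 < ε)
    (μ : ℕ → ℝ) (hμ : ∀ t, μ t ∈ Set.Icc (0 : ℝ) (1 / 2))
    (hinf : 0 < ⨅ t, μ t)
    (E : ℕ → Set (Sym2 V))
    (x0 : V → EuclideanSpace ℝ (Fin d)) :
    ∀ᵐ ω ∂P, ∀ δ : ℝ, 0 < δ → ∃ t : ℕ, ∀ s, t ≤ s → ∀ i j : V, s(i, j) ∈ E s →
      ‖deffuantTraj ε μ E (fun u => e u ω) x0 s i
          - deffuantTraj ε μ E (fun u => e u ω) x0 s j‖ ≤ ε →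
      ‖deffuantTraj ε μ E (fun u => e u ω) x0 s i
          - deffuantTraj ε μ E (fun u => e u ω) x0 s j‖ ≤ δ := by
  have hae : ∀ᵐ ω ∂P, ∀ n : ℕ, ∀ pr : V × V, pr.1 ≠ pr.2 →
      ∃ T : ℕ, ∀ s, T ≤ s → ¬ (s(pr.1, pr.2) ∈ E s ∧
        (1 : ℝ) / (n + 1) < ‖deffuantTraj ε μ E (fun u => e u ω) x0 s pr.1
            - deffuantTraj ε μ E (fun u => e u ω) x0 s pr.2‖ ∧
        ‖deffuantTraj ε μ E (fun u => e u ω) x0 s pr.1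
            - deffuantTraj ε μ E (fun u => e u ω) x0 s pr.2‖ ≤ ε) := by
    rw [ae_all_iff]
    intro n
    rw [ae_all_iff]
    intro pr
    by_cases hne : pr.1 = pr.2
    · exact ae_of_all _ fun ω h => absurd hne h
    · have hkey := DeffuantAux.key hV P e hmeas hindep hunif ε μ hμ hinf E x0
        pr.1 pr.2 hne ((1 : ℝ) / (n + 1)) (by positivity)
      filter_upwards [hkey] with ω h1
      exact fun _ => h1
  filter_upwards [hae] with ω hω δ hδ
  obtain ⟨n, hn⟩ := exists_nat_one_div_lt hδ
  have hchoice : ∀ pr : V × V, ∃ T : ℕ, pr.1 ≠ pr.2 → ∀ s, T ≤ s →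
      ¬ (s(pr.1, pr.2) ∈ E s ∧
        (1 : ℝ) / (n + 1) < ‖deffuantTraj ε μ E (fun u => e u ω) x0 s pr.1
            - deffuantTraj ε μ E (fun u => e u ω) x0 s pr.2‖ ∧
        ‖deffuantTraj ε μ E (fun u => e u ω) x0 s pr.1
            - deffuantTraj ε μ E (fun u => e u ω) x0 s pr.2‖ ≤ ε) := by
    intro pr
    by_cases hne : pr.1 = pr.2
    · exact ⟨0, fun h => absurd hne h⟩
    · obtain ⟨T, hT⟩ := hω n pr hne
      exact ⟨T, fun _ => hT⟩
  choose T hT using hchoice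
  refine ⟨Finset.univ.sup T, fun s hs i j hmem hle => ?_⟩
  by_cases hij : i = j
  · subst hij
    simp only [sub_self, norm_zero]
    exact hδ.le
  · have hTs : T (i, j) ≤ s := le_trans (Finset.le_sup (Finset.mem_univ (i, j))) hs
    have hnot := hT (i, j) hij s hTs
    by_contra hgt
    push_neg at hgt
    exact hnot ⟨hmem, lt_trans hn hgt, hle⟩
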